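/- Let c₁, c₂, c₃, τ be real numbers and H = c₁ X⊗X + c₂ Y⊗Y + c₃ Z⊗Z. Because XX, YY, ZZ mutually commute, the dynamical decoupling by the sequence (I⊗X, X⊗Y, I⊗X, X⊗Y) is exact: the full pulsed evolution satisfies (X⊗Y)·exp(−iτH)·(I⊗X)·exp(−iτH)·(X⊗Y)·exp(−iτH)·(I⊗X)·exp(−iτH) = −(I⊗I), i.e., it equals the 4×4 identity up to the global phase −1, for every real τ. -/

import Mathlib

open Matrix Kronecker NormedSpace

noncomputable section

/-- Pauli X matrix. -/
def PX : Matrix (Fin 2) (Fin 2) ℂ := !![0, 1; 1, 0]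
/-- Pauli Y matrix. -/
def PY : Matrix (Fin 2) (Fin 2) ℂ := !![0, -Complex.I; Complex.I, 0]
/-- Pauli Z matrix. -/
def PZ : Matrix (Fin 2) (Fin 2) ℂ := !![1, 0; 0, -1]
/-- 2×2 identity matrix. -/
def PI : Matrix (Fin 2) (Fin 2) ℂ := 1

/-- Two-qubit operators: 4×4 matrices indexed by `Fin 2 × Fin 2`. -/
abbrev Mat4 := Matrix (Fin 2 × Fin 2) (Fin 2 × Fin 2) ℂ

def DDham (a b c : ℂ) : Mat4 := a • (PX ⊗ₖ PX) + b • (PY ⊗ₖ PY) + c • (PZ ⊗ₖ PZ)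

lemma neg_kron (A B : Matrix (Fin 2) (Fin 2) ℂ) : (-A) ⊗ₖ B = -(A ⊗ₖ B) := by
  rw [← neg_one_smul ℂ A, Matrix.smul_kronecker, neg_one_smul]
lemma kron_neg (A B : Matrix (Fin 2) (Fin 2) ℂ) : A ⊗ₖ (-B) = -(A ⊗ₖ B) := by
  rw [← neg_one_smul ℂ B, Matrix.kronecker_smul, neg_one_smul]

lemma PXX : PX * PX = 1 := by
  ext i j; fin_cases i <;> fin_cases j <;>
    simp [PX, Matrix.mul_apply, Fin.sum_univ_two, Matrix.one_apply]
lemma PYY : PY * PY = 1 := by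
  ext i j; fin_cases i <;> fin_cases j <;>
    simp [PY, Matrix.mul_apply, Fin.sum_univ_two, Matrix.one_apply, Complex.I_mul_I]
lemma PXPY : PX * PY = Complex.I • PZ := by
  ext i j; fin_cases i <;> fin_cases j <;>
    simp [PX, PY, PZ, Matrix.mul_apply, Fin.sum_univ_two]
lemma PYPX : PY * PX = (-Complex.I) • PZ := by
  ext i j; fin_cases i <;> fin_cases j <;>
    simp [PX, PY, PZ, Matrix.mul_apply, Fin.sum_univ_two]
lemma PXPZ : PX * PZ = (-Complex.I) • PY := by
  ext i j; fin_cases i <;> fin_cases j <;>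
    simp [PX, PY, PZ, Matrix.mul_apply, Fin.sum_univ_two, Complex.I_mul_I]
lemma PZPX : PZ * PX = Complex.I • PY := by
  ext i j; fin_cases i <;> fin_cases j <;>
    simp [PX, PY, PZ, Matrix.mul_apply, Fin.sum_univ_two, Complex.I_mul_I]
lemma PYPZ : PY * PZ = Complex.I • PX := by
  ext i j; fin_cases i <;> fin_cases j <;>
    simp [PX, PY, PZ, Matrix.mul_apply, Fin.sum_univ_two]
lemma PZPY : PZ * PY = (-Complex.I) • PX := by
  ext i j; fin_cases i <;> fin_cases j <;>
    simp [PX, PY, PZ, Matrix.mul_apply, Fin.sum_univ_two]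

lemma PXYX : PX * PY * PX = -PY := by
  rw [PXPY, Matrix.smul_mul, PZPX, smul_smul, Complex.I_mul_I, neg_one_smul]
lemma PXZX : PX * PZ * PX = -PZ := by
  rw [PXPZ, Matrix.smul_mul, PYPX]
  simp [smul_smul, Complex.I_mul_I]
lemma PYXY : PY * PX * PY = -PX := by
  rw [PYPX, Matrix.smul_mul, PZPY]
  simp [smul_smul, Complex.I_mul_I]
lemma PYZY : PY * PZ * PY = -PZ := by
  rw [PYPZ, Matrix.smul_mul, PXPY, smul_smul, Complex.I_mul_I, neg_one_smul]
lemma PXXX : PX * PX * PX = PX := by rw [PXX, Matrix.one_mul]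
lemma PYYY : PY * PY * PY = PY := by rw [PYY, Matrix.one_mul]

lemma P1sq : (PI ⊗ₖ PX) * (PI ⊗ₖ PX) = (1 : Mat4) := by
  rw [← Matrix.mul_kronecker_mul, PXX, PI, Matrix.one_mul, Matrix.one_kronecker_one]
lemma P2sq : (PX ⊗ₖ PY) * (PX ⊗ₖ PY) = (1 : Mat4) := by
  rw [← Matrix.mul_kronecker_mul, PXX, PYY, Matrix.one_kronecker_one]

lemma conj1 (a b c : ℂ) :
    (PI ⊗ₖ PX) * DDham a b c * (PI ⊗ₖ PX) = DDham a (-b) (-c) := by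
  simp only [DDham, Matrix.mul_add, Matrix.add_mul, Matrix.mul_smul, Matrix.smul_mul,
    ← Matrix.mul_kronecker_mul, PI, Matrix.one_mul, PXXX, PXYX, PXZX]
  simp [neg_kron, kron_neg, smul_smul]

lemma conj2 (a b c : ℂ) :
    (PX ⊗ₖ PY) * DDham a b c * (PX ⊗ₖ PY) = DDham (-a) (-b) c := by
  simp only [DDham, Matrix.mul_add, Matrix.add_mul, Matrix.mul_smul, Matrix.smul_mul,
    ← Matrix.mul_kronecker_mul, PXYX, PYXY, PXZX, PYZY, PXXX, PYYY]
  simp [neg_kron, kron_neg, smul_smul]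

lemma KXY : Commute ((PX ⊗ₖ PX) : Mat4) (PY ⊗ₖ PY) := by
  unfold Commute SemiconjBy
  rw [← Matrix.mul_kronecker_mul, ← Matrix.mul_kronecker_mul, PXPY, PYPX]
  simp [Matrix.kronecker_smul, Matrix.smul_kronecker, smul_smul, neg_kron, kron_neg]

lemma KXZ : Commute ((PX ⊗ₖ PX) : Mat4) (PZ ⊗ₖ PZ) := by
  unfold Commute SemiconjBy
  rw [← Matrix.mul_kronecker_mul, ← Matrix.mul_kronecker_mul, PXPZ, PZPX]
  simp [Matrix.kronecker_smul, Matrix.smul_kronecker, smul_smul, neg_kron, kron_neg]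

lemma KYZ : Commute ((PY ⊗ₖ PY) : Mat4) (PZ ⊗ₖ PZ) := by
  unfold Commute SemiconjBy
  rw [← Matrix.mul_kronecker_mul, ← Matrix.mul_kronecker_mul, PYPZ, PZPY]
  simp [Matrix.kronecker_smul, Matrix.smul_kronecker, smul_smul, neg_kron, kron_neg]

lemma DDcomm (a b c a' b' c' : ℂ) : Commute (DDham a b c) (DDham a' b' c') := by
  have h : ∀ (A B : Mat4), Commute A B → ∀ (r s : ℂ), Commute (r • A) (s • B) :=
    fun A B hc r s => (hc.smul_left r).smul_right s
  unfold DDham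
  exact
    Commute.add_left
      (Commute.add_left
        (Commute.add_right (Commute.add_right (h _ _ (Commute.refl _) a a') (h _ _ KXY a b'))
          (h _ _ KXZ a c'))
        (Commute.add_right (Commute.add_right (h _ _ KXY.symm b a') (h _ _ (Commute.refl _) b b'))
          (h _ _ KYZ b c')))
      (Commute.add_right (Commute.add_right (h _ _ KXZ.symm c a') (h _ _ KYZ.symm c b'))
        (h _ _ (Commute.refl _) c c'))

lemma DDadd (a b c a' b' c' : ℂ) :
    DDham a b c + DDham a' b' c' = DDham (a+a') (b+b') (c+c') := by
  unfold DDham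
  simp [add_smul]
  abel

lemma DDmerge (a b c a' b' c' : ℂ) :
    exp (DDham a b c) * exp (DDham a' b' c') = exp (DDham (a+a') (b+b') (c+c')) := by
  rw [← DDadd]
  exact (Matrix.exp_add_of_commute _ _ (DDcomm a b c a' b' c')).symm

lemma PZZ : PZ * PZ = 1 := by
  ext i j; fin_cases i <;> fin_cases j <;>
    simp [PZ, Matrix.mul_apply, Fin.sum_univ_two, Matrix.one_apply]

lemma pulseprod :
    ((PX ⊗ₖ PY) : Mat4) * ((PI ⊗ₖ PX) * ((PX ⊗ₖ PY) * (PI ⊗ₖ PX))) = -(PI ⊗ₖ PI) := by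
  simp only [← mul_assoc, ← Matrix.mul_kronecker_mul, PI, Matrix.mul_one]
  rw [PXX, PYXY, Matrix.neg_mul, PXX, kron_neg, Matrix.one_kronecker_one]

lemma DDzero (x y z : ℂ) (hx : x = 0) (hy : y = 0) (hz : z = 0) :
    exp (DDham x y z) = 1 := by
  subst hx hy hz
  simp [DDham, exp_zero]

theorem exact_decoupling_heisenberg_XX_XYXY
    (c₁ c₂ c₃ τ : ℝ) (H : Mat4)
    (hH : H = (c₁ : ℂ) • (PX ⊗ₖ PX) + (c₂ : ℂ) • (PY ⊗ₖ PY) + (c₃ : ℂ) • (PZ ⊗ₖ PZ)) :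
    (PX ⊗ₖ PY) * exp ((-(Complex.I * (τ : ℂ))) • H) *
      (PI ⊗ₖ PX) * exp ((-(Complex.I * (τ : ℂ))) • H) *
      (PX ⊗ₖ PY) * exp ((-(Complex.I * (τ : ℂ))) • H) *
      (PI ⊗ₖ PX) * exp ((-(Complex.I * (τ : ℂ))) • H) = -(PI ⊗ₖ PI) := by
  set t : ℂ := -(Complex.I * (τ : ℂ)) with ht
  have hA : t • H = DDham (t * c₁) (t * c₂) (t * c₃) := by
    rw [hH]; unfold DDham
    rw [smul_add, smul_add, smul_smul, smul_smul, smul_smul]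
  have sw1 : ∀ x y z : ℂ, exp (DDham x y z) * (PI ⊗ₖ PX)
      = (PI ⊗ₖ PX) * exp (DDham x (-y) (-z)) := by
    intro x y z
    have hU : exp ((PI ⊗ₖ PX) * DDham x (-y) (-z) * (PI ⊗ₖ PX))
        = (PI ⊗ₖ PX) * exp (DDham x (-y) (-z)) * (PI ⊗ₖ PX) :=
      Matrix.exp_units_conj ⟨PI ⊗ₖ PX, PI ⊗ₖ PX, P1sq, P1sq⟩ _
    rw [conj1, neg_neg, neg_neg] at hU
    rw [hU, mul_assoc, mul_assoc, P1sq, mul_one]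
  have sw2 : ∀ x y z : ℂ, exp (DDham x y z) * (PX ⊗ₖ PY)
      = (PX ⊗ₖ PY) * exp (DDham (-x) (-y) z) := by
    intro x y z
    have hU : exp ((PX ⊗ₖ PY) * DDham (-x) (-y) z * (PX ⊗ₖ PY))
        = (PX ⊗ₖ PY) * exp (DDham (-x) (-y) z) * (PX ⊗ₖ PY) :=
      Matrix.exp_units_conj ⟨PX ⊗ₖ PY, PX ⊗ₖ PY, P2sq, P2sq⟩ _
    rw [conj2, neg_neg, neg_neg] at hU
    rw [hU, mul_assoc, mul_assoc, P2sq, mul_one]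
  have s1M : ∀ (x y z : ℂ) (M : Mat4), exp (DDham x y z) * ((PI ⊗ₖ PX) * M)
      = (PI ⊗ₖ PX) * (exp (DDham x (-y) (-z)) * M) := by
    intro x y z M; rw [← mul_assoc, sw1, mul_assoc]
  have s2M : ∀ (x y z : ℂ) (M : Mat4), exp (DDham x y z) * ((PX ⊗ₖ PY) * M)
      = (PX ⊗ₖ PY) * (exp (DDham (-x) (-y) z) * M) := by
    intro x y z M; rw [← mul_assoc, sw2, mul_assoc]
  have mM : ∀ (a b c a' b' c' : ℂ) (M : Mat4),
      exp (DDham a b c) * (exp (DDham a' b' c') * M)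
        = exp (DDham (a + a') (b + b') (c + c')) * M := by
    intro a b c a' b' c' M; rw [← mul_assoc, DDmerge]
  rw [hA]
  simp only [mul_assoc]
  rw [s1M, mM, s2M, mM, s1M, DDmerge]
  rw [DDzero _ _ _ (by ring) (by ring) (by ring), mul_one]
  exact pulseprod
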